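/- Let p ∈ ℝ[x₁,x₂] satisfy p_* := min_{x∈[−1,1]²} p(x) > 0. Then there exist M ∈ ℕ and non-negative real numbers b_α for multiindices α = (α₁,α₂,α₃,α₄) with |α| ≤ M, such that p(x) = Σ_{|α|≤M} b_α · γ₁(x)^{α₁} γ₂(x)^{α₂} γ₃(x)^{α₃} γ₄(x)^{α₄} identically, where γ₁(x) = (1+x₁)/4, γ₂(x) = (1−x₁)/4, γ₃(x) = (1+x₂)/4, γ₄(x) = (1−x₂)/4. -/

import Mathlib

open MvPolynomial

open Finset


/-- ratio of binomial coefficients -/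
noncomputable def rr (n i k : ℕ) : ℝ := (i.choose k : ℝ) / (n.choose k : ℝ)

lemma rr_nonneg (n i k : ℕ) : 0 ≤ rr n i k := by
  unfold rr; positivity

lemma rr_le_one {n i k : ℕ} (h : i ≤ n) : rr n i k ≤ 1 := by
  unfold rr
  rcases eq_or_ne (n.choose k) 0 with h0 | h0
  · simp [h0]
  · rw [div_le_one (by positivity)]
    exact_mod_cast Nat.choose_le_choose k h

lemma rr_eq_zero_of_lt {n i k : ℕ} (h : i < k) : rr n i k = 0 := by
  unfold rr; rw [Nat.choose_eq_zero_of_lt h]; simp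

/-- Bernstein expansion of `s^k` when `s + t = 1`. -/
lemma bern_expand (n k : ℕ) (hk : k ≤ n) (s t : ℝ) (hst : s + t = 1) :
    s ^ k = ∑ i ∈ range (n + 1), rr n i k * (n.choose i : ℝ) * s ^ i * t ^ (n - i) := by
  have hnk : (n.choose k : ℝ) ≠ 0 := by
    exact_mod_cast (Nat.choose_pos hk).ne'
  have key : ∀ i, k ≤ i → i ≤ n →
      rr n i k * (n.choose i : ℝ) = ((n-k).choose (i-k) : ℝ) := by
    intro i hik hin
    have hmul : (n.choose i : ℝ) * (i.choose k : ℝ)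
        = (n.choose k : ℝ) * ((n-k).choose (i-k) : ℝ) := by
      exact_mod_cast congrArg (Nat.cast (R := ℝ)) (Nat.choose_mul (n := n) hik)
    unfold rr
    rw [div_mul_eq_mul_div, div_eq_iff hnk]
    linarith [hmul]
  have step1 : ∑ i ∈ range (n + 1), rr n i k * (n.choose i : ℝ) * s ^ i * t ^ (n - i)
      = ∑ i ∈ Ico k (n+1), ((n-k).choose (i-k) : ℝ) * s ^ i * t ^ (n - i) := by
    have hsub : Ico k (n+1) ⊆ range (n+1) := by
      intro i hi; rw [mem_Ico] at hi; rw [mem_range]; exact hi.2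
    rw [← Finset.sum_subset hsub]
    · apply Finset.sum_congr rfl
      intro i hi
      rw [mem_Ico] at hi
      rw [key i hi.1 (Nat.lt_succ_iff.mp hi.2)]
    · intro i hi hni
      rw [mem_range] at hi
      rw [mem_Ico, not_and, not_lt] at hni
      by_cases hik : k ≤ i
      · omega
      · rw [rr_eq_zero_of_lt (not_le.mp hik)]; ring
  rw [step1, Finset.sum_Ico_eq_sum_range]
  have h2 : n + 1 - k = (n - k) + 1 := by omega
  rw [h2]
  have h3 : ∀ m ∈ range ((n-k)+1),
      ((n-k).choose (k + m - k) : ℝ) * s ^ (k+m) * t ^ (n - (k+m))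
      = s ^ k * (s ^ m * t ^ ((n-k) - m) * ((n-k).choose m : ℝ)) := by
    intro m hm
    rw [mem_range] at hm
    have : k + m - k = m := by omega
    rw [this]
    have : n - (k + m) = (n - k) - m := by omega
    rw [this, pow_add]
    ring
  rw [Finset.sum_congr rfl h3, ← Finset.mul_sum, ← add_pow, hst, one_pow, mul_one]



lemma prod_diff_bound (u v : ℕ → ℝ) (k : ℕ)
    (hu : ∀ m < k, 0 ≤ u m ∧ u m ≤ 1) (hv : ∀ m < k, 0 ≤ v m ∧ v m ≤ 1) :
    |∏ m ∈ range k, u m - ∏ m ∈ range k, v m| ≤ ∑ m ∈ range k, |u m - v m| := by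
  induction k with
  | zero => simp
  | succ k ih =>
    have hu' : ∀ m < k, 0 ≤ u m ∧ u m ≤ 1 := fun m hm => hu m (by omega)
    have hv' : ∀ m < k, 0 ≤ v m ∧ v m ≤ 1 := fun m hm => hv m (by omega)
    rw [prod_range_succ, prod_range_succ, sum_range_succ]
    have hPu : 0 ≤ ∏ m ∈ range k, u m ∧ ∏ m ∈ range k, u m ≤ 1 := by
      constructor
      · exact Finset.prod_nonneg fun m hm => (hu' m (mem_range.mp hm)).1
      · exact Finset.prod_le_one (fun m hm => (hu' m (mem_range.mp hm)).1)
          (fun m hm => (hu' m (mem_range.mp hm)).2)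
    have hPv : 0 ≤ ∏ m ∈ range k, v m ∧ ∏ m ∈ range k, v m ≤ 1 := by
      constructor
      · exact Finset.prod_nonneg fun m hm => (hv' m (mem_range.mp hm)).1
      · exact Finset.prod_le_one (fun m hm => (hv' m (mem_range.mp hm)).1)
          (fun m hm => (hv' m (mem_range.mp hm)).2)
    have huk := hu k (by omega)
    have hvk := hv k (by omega)
    calc |(∏ m ∈ range k, u m) * u k - (∏ m ∈ range k, v m) * v k|
        = |(∏ m ∈ range k, u m - ∏ m ∈ range k, v m) * u k
            + (∏ m ∈ range k, v m) * (u k - v k)| := by ring_nf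
      _ ≤ |(∏ m ∈ range k, u m - ∏ m ∈ range k, v m) * u k|
            + |(∏ m ∈ range k, v m) * (u k - v k)| := abs_add_le _ _
      _ ≤ |∏ m ∈ range k, u m - ∏ m ∈ range k, v m| * 1
            + 1 * |u k - v k| := by
          rw [abs_mul, abs_mul]
          gcongr
          · rw [abs_of_nonneg huk.1]; exact huk.2
          · rw [abs_of_nonneg hPv.1]; exact hPv.2
      _ ≤ (∑ m ∈ range k, |u m - v m|) + |u k - v k| := by
          rw [mul_one, one_mul]
          exact add_le_add_left (ih hu' hv') _

lemma rr_eq_prod {n i k : ℕ} (hki : k ≤ i) (hin : i ≤ n) :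
    rr n i k = ∏ m ∈ range k, (((i : ℝ) - m) / ((n : ℝ) - m)) := by
  have hkn : k ≤ n := hki.trans hin
  have hfact : (Nat.factorial k : ℝ) ≠ 0 := by exact_mod_cast (Nat.factorial_pos k).ne'
  have h1 : (i.choose k : ℝ) = (i.descFactorial k : ℝ) / (Nat.factorial k : ℝ) := by
    rw [Nat.descFactorial_eq_factorial_mul_choose]
    push_cast
    field_simp
  have h2 : (n.choose k : ℝ) = (n.descFactorial k : ℝ) / (Nat.factorial k : ℝ) := by
    rw [Nat.descFactorial_eq_factorial_mul_choose]
    push_cast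
    field_simp
  have hcast : ∀ j : ℕ, j ≤ n → ((j.descFactorial k : ℝ)) = ∏ m ∈ range k, ((j : ℝ) - m) ∨ True := fun _ _ => Or.inr trivial
  unfold rr
  rw [h1, h2]
  rw [show (i.descFactorial k : ℝ) / ↑k.factorial / (↑(n.descFactorial k) / ↑k.factorial)
      = (i.descFactorial k : ℝ) / (n.descFactorial k : ℝ) by field_simp]
  rw [Nat.descFactorial_eq_prod_range, Nat.descFactorial_eq_prod_range]
  push_cast [Nat.cast_prod]
  rw [← Finset.prod_div_distrib]
  apply Finset.prod_congr rfl
  intro m hm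
  rw [mem_range] at hm
  rw [Nat.cast_sub (by omega), Nat.cast_sub (by omega)]

lemma rr_bound {n i k : ℕ} (hkn : k < n) (hin : i ≤ n) :
    |rr n i k - ((i : ℝ) / n) ^ k| ≤ (k : ℝ) ^ 2 / ((n : ℝ) - k) := by
  have hn : (0 : ℝ) < n := by
    have : 0 < n := by omega
    exact_mod_cast this
  have hnk : (0 : ℝ) < (n : ℝ) - k := by
    have : (k : ℝ) < n := by exact_mod_cast hkn
    linarith
  have hin' : (i : ℝ) ≤ n := by exact_mod_cast hin
  have hifrac : 0 ≤ (i : ℝ) / n ∧ (i : ℝ) / n ≤ 1 := by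
    constructor
    · positivity
    · rw [div_le_one hn]; exact hin'
  rcases lt_or_ge i k with hik | hik
  · -- i < k : rr = 0
    rw [rr_eq_zero_of_lt hik, zero_sub, abs_neg, abs_of_nonneg (by positivity)]
    have hk1 : 1 ≤ k := by omega
    have h1 : ((i : ℝ) / n) ^ k ≤ (i : ℝ) / n := by
      calc ((i : ℝ) / n) ^ k ≤ ((i : ℝ) / n) ^ 1 :=
            pow_le_pow_of_le_one hifrac.1 hifrac.2 hk1
        _ = (i : ℝ) / n := pow_one _
    have hik' : (i : ℝ) ≤ k := by exact_mod_cast hik.le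
    have h2 : (i : ℝ) / n ≤ (k : ℝ) / n := by gcongr
    have h3 : (k : ℝ) / n ≤ (k : ℝ) ^ 2 / ((n : ℝ) - k) := by
      rw [div_le_div_iff₀ hn hnk]
      have hk1' : (1 : ℝ) ≤ k := by exact_mod_cast hk1
      have e1 : (k : ℝ) * ((n : ℝ) - k) ≤ (k : ℝ) * n := by nlinarith
      have hkk : (k : ℝ) ≤ (k : ℝ) ^ 2 := by nlinarith [mul_nonneg (by linarith : (0:ℝ) ≤ (k:ℝ) - 1) (by positivity : (0:ℝ) ≤ (k:ℝ))]
      have e2 : (k : ℝ) * n ≤ (k : ℝ) ^ 2 * n := mul_le_mul_of_nonneg_right hkk hn.le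
      linarith
    linarith
  · -- k ≤ i
    rw [rr_eq_prod hik hin]
    have hv : ((i : ℝ) / n) ^ k = ∏ m ∈ range k, ((i : ℝ) / n) := by
      rw [prod_const, card_range]
    rw [hv]
    have hu : ∀ m < k, 0 ≤ ((i : ℝ) - m) / ((n : ℝ) - m) ∧ ((i : ℝ) - m) / ((n : ℝ) - m) ≤ 1 := by
      intro m hm
      have hmi : (m : ℝ) ≤ i := by exact_mod_cast (by omega : m ≤ i)
      have hmn : (m : ℝ) < n := by exact_mod_cast (by omega : m < n)
      constructor
      · apply div_nonneg <;> linarith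
      · rw [div_le_one (by linarith)]; linarith
    have hbound := prod_diff_bound (fun m => ((i : ℝ) - m) / ((n : ℝ) - m))
      (fun _ => (i : ℝ) / n) k hu (fun _ _ => hifrac)
    refine hbound.trans ?_
    have hterm : ∀ m ∈ range k, |((i : ℝ) - m) / ((n : ℝ) - m) - (i : ℝ) / n|
        ≤ (k : ℝ) / ((n : ℝ) - k) := by
      intro m hm
      rw [mem_range] at hm
      have hmn : (m : ℝ) < n := by exact_mod_cast (by omega : m < n)
      have hnm : (0 : ℝ) < (n : ℝ) - m := by linarith
      have hdiff : ((i : ℝ) - m) / ((n : ℝ) - m) - (i : ℝ) / n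
          = ((m : ℝ) * ((i : ℝ) - n)) / (((n : ℝ) - m) * n) := by
        field_simp
        ring
      rw [hdiff, abs_div, abs_of_pos (mul_pos hnm hn)]
      have hnum : |(m : ℝ) * ((i : ℝ) - n)| = (m : ℝ) * ((n : ℝ) - i) := by
        rw [abs_mul, abs_of_nonneg (by positivity), abs_of_nonpos (by linarith)]
        ring
      rw [hnum]
      have hmk : (m : ℝ) ≤ k := by exact_mod_cast hm.le
      calc (m : ℝ) * ((n : ℝ) - i) / (((n : ℝ) - m) * n)
          ≤ (k : ℝ) * n / (((n : ℝ) - k) * n) := by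
            apply div_le_div₀ (by positivity) ?_ (by positivity) ?_
            · have hi0 : (0 : ℝ) ≤ i := by positivity
              nlinarith
            · have hmk : (m : ℝ) ≤ k := by exact_mod_cast hm.le
              nlinarith
        _ = (k : ℝ) / ((n : ℝ) - k) := by
            rw [mul_div_mul_right _ _ hn.ne']
    calc ∑ m ∈ range k, |((i : ℝ) - m) / ((n : ℝ) - m) - (i : ℝ) / n|
        ≤ ∑ m ∈ range k, (k : ℝ) / ((n : ℝ) - k) := Finset.sum_le_sum hterm
      _ = (k : ℝ) * ((k : ℝ) / ((n : ℝ) - k)) := by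
          rw [sum_const, card_range, nsmul_eq_mul]
      _ = (k : ℝ) ^ 2 / ((n : ℝ) - k) := by ring


theorem stmt16 (p : MvPolynomial (Fin 2) ℝ) (pstar : ℝ)
    (hpleast : IsLeast {r : ℝ | ∃ x : Fin 2 → ℝ, (∀ i, |x i| ≤ 1) ∧ eval x p = r} pstar)
    (hppos : 0 < pstar) :
    ∃ (M : ℕ) (b : (Fin 4 → ℕ) → ℝ), (∀ α, 0 ≤ b α) ∧
      ∀ x : Fin 2 → ℝ,
        eval x p =
          ∑ α ∈ (Fintype.piFinset fun _ : Fin 4 => Finset.range (M + 1)).filter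
              (fun α => ∑ i, α i ≤ M),
            b α * ((1 + x 0) / 4) ^ α 0 * ((1 - x 0) / 4) ^ α 1 *
              ((1 + x 1) / 4) ^ α 2 * ((1 - x 1) / 4) ^ α 3 := by
  classical
  obtain ⟨-, hplb⟩ := hpleast
  set q : MvPolynomial (Fin 2) ℝ := bind₁ (fun t => C 2 * X t - 1) p with hq
  have eval_q : ∀ s : Fin 2 → ℝ, eval s q = eval (fun t => 2 * s t - 1) p := by
    intro s
    rw [hq, show (eval s) = eval₂Hom (RingHom.id ℝ) s from rfl, eval₂Hom_bind₁]
    simp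
  set K := q.totalDegree with hK
  have hdK : ∀ d ∈ q.support, ∀ t, d t ≤ K := by
    intro d hd t
    refine le_trans ?_ (le_totalDegree hd)
    rcases eq_or_ne (d t) 0 with h | h
    · simp [h]
    · exact Finset.single_le_sum (f := fun i => d i) (fun _ _ => Nat.zero_le _)
        (Finsupp.mem_support_iff.mpr h)
  set A := ∑ d ∈ q.support, |coeff d q| with hA
  have hA0 : 0 ≤ A := Finset.sum_nonneg fun d _ => abs_nonneg _
  obtain ⟨m, hm⟩ := exists_nat_gt (2 * A * (K : ℝ) ^ 2 / pstar)
  set n := K + 1 + m with hn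
  have hKn : K < n := by omega
  have hKnR : (K : ℝ) < (n : ℝ) := by exact_mod_cast hKn
  have hnK : (0 : ℝ) < (n : ℝ) - K := by linarith
  have hn0 : (0 : ℝ) < (n : ℝ) := by
    have : 0 < n := by omega
    exact_mod_cast this
  have herr : 2 * A * (K : ℝ) ^ 2 / ((n : ℝ) - K) < pstar := by
    rw [div_lt_iff₀ hnK]
    have h1 : 2 * A * (K : ℝ) ^ 2 / pstar < m := hm
    rw [div_lt_iff₀ hppos] at h1
    have h2 : (m : ℝ) ≤ (n : ℝ) - K - 1 := by
      have : (n : ℝ) = (K : ℝ) + 1 + m := by exact_mod_cast congrArg (Nat.cast (R := ℝ)) hn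
      linarith
    nlinarith
  set c : ℕ → ℕ → ℝ :=
    fun i j => ∑ d ∈ q.support, coeff d q * rr n i (d 0) * rr n j (d 1) with hc
  -- positivity of Bernstein coefficients
  have hcpos : ∀ i j : ℕ, i ≤ n → j ≤ n → 0 ≤ c i j := by
    intro i j hi hj
    set sg : Fin 2 → ℝ := fun t => if t = 0 then (i : ℝ) / n else (j : ℝ) / n with hsg
    have hsgb : ∀ t, 0 ≤ sg t ∧ sg t ≤ 1 := by
      intro t
      have h1 : (i : ℝ) ≤ n := by exact_mod_cast hi
      have h2 : (j : ℝ) ≤ n := by exact_mod_cast hj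
      rcases ite_eq_or_eq (t = 0) ((i:ℝ)/n) ((j:ℝ)/n) with h | h <;>
        rw [hsg] <;> simp only [h] <;>
        constructor <;> first
          | positivity
          | rw [div_le_one hn0]; assumption
    have hgrid_mem : pstar ≤ eval sg q := by
      rw [eval_q sg]
      apply hplb
      refine ⟨fun t => 2 * sg t - 1, fun t => ?_, rfl⟩
      have := hsgb t
      show |2 * sg t - 1| ≤ 1
      rw [abs_le]
      constructor <;> linarith [this.1, this.2]
    have hgrid_val : eval sg q
        = ∑ d ∈ q.support, coeff d q * ((i : ℝ) / n) ^ (d 0) * ((j : ℝ) / n) ^ (d 1) := by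
      rw [eval_eq']
      refine Finset.sum_congr rfl fun d _ => ?_
      rw [Fin.prod_univ_two]
      have h0 : sg 0 = (i : ℝ) / n := by simp [hsg]
      have h1 : sg 1 = (j : ℝ) / n := by simp [hsg]
      rw [h0, h1, mul_assoc]
    have hdiff : |c i j - eval sg q| ≤ 2 * A * (K : ℝ) ^ 2 / ((n : ℝ) - K) := by
      rw [hgrid_val, hc, ← Finset.sum_sub_distrib]
      refine (Finset.abs_sum_le_sum_abs _ _).trans ?_
      have hterm : ∀ d ∈ q.support,
          |coeff d q * rr n i (d 0) * rr n j (d 1)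
            - coeff d q * ((i : ℝ) / n) ^ (d 0) * ((j : ℝ) / n) ^ (d 1)|
          ≤ |coeff d q| * (2 * (K : ℝ) ^ 2 / ((n : ℝ) - K)) := by
        intro d hd
        have hk0 : d 0 ≤ K := hdK d hd 0
        have hk1 : d 1 ≤ K := hdK d hd 1
        have hmono : ∀ k : ℕ, k ≤ K →
            (k : ℝ) ^ 2 / ((n : ℝ) - k) ≤ (K : ℝ) ^ 2 / ((n : ℝ) - K) := by
          intro k hk
          have hkR : (k : ℝ) ≤ K := by exact_mod_cast hk
          apply div_le_div₀ (by positivity) ?_ hnK (by linarith)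
          have : (0:ℝ) ≤ (k:ℝ) := by positivity
          nlinarith
        have hb0 : |rr n i (d 0) - ((i : ℝ) / n) ^ (d 0)| ≤ (K : ℝ) ^ 2 / ((n : ℝ) - K) :=
          (rr_bound (by omega) hi).trans (hmono _ hk0)
        have hb1 : |rr n j (d 1) - ((j : ℝ) / n) ^ (d 1)| ≤ (K : ℝ) ^ 2 / ((n : ℝ) - K) :=
          (rr_bound (by omega) hj).trans (hmono _ hk1)
        have hr0 : 0 ≤ rr n i (d 0) ∧ rr n i (d 0) ≤ 1 := ⟨rr_nonneg _ _ _, rr_le_one hi⟩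
        have hv1 : 0 ≤ ((j : ℝ) / n) ^ (d 1) ∧ ((j : ℝ) / n) ^ (d 1) ≤ 1 := by
          have h2 : (j : ℝ) ≤ n := by exact_mod_cast hj
          constructor
          · positivity
          · exact pow_le_one₀ (by positivity) (by rw [div_le_one hn0]; exact h2)
        have hv0 : 0 ≤ ((i : ℝ) / n) ^ (d 0) ∧ ((i : ℝ) / n) ^ (d 0) ≤ 1 := by
          have h2 : (i : ℝ) ≤ n := by exact_mod_cast hi
          constructor
          · positivity
          · exact pow_le_one₀ (by positivity) (by rw [div_le_one hn0]; exact h2)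
        have hprod : |rr n i (d 0) * rr n j (d 1)
            - ((i : ℝ) / n) ^ (d 0) * ((j : ℝ) / n) ^ (d 1)|
            ≤ 2 * (K : ℝ) ^ 2 / ((n : ℝ) - K) := by
          calc |rr n i (d 0) * rr n j (d 1) - ((i : ℝ)/n) ^ (d 0) * ((j : ℝ)/n) ^ (d 1)|
              = |rr n i (d 0) * (rr n j (d 1) - ((j : ℝ)/n) ^ (d 1))
                  + ((j : ℝ)/n) ^ (d 1) * (rr n i (d 0) - ((i : ℝ)/n) ^ (d 0))| := by ring_nf
            _ ≤ |rr n i (d 0) * (rr n j (d 1) - ((j : ℝ)/n) ^ (d 1))|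
                  + |((j : ℝ)/n) ^ (d 1) * (rr n i (d 0) - ((i : ℝ)/n) ^ (d 0))| := abs_add_le _ _
            _ ≤ 1 * |rr n j (d 1) - ((j : ℝ)/n) ^ (d 1)|
                  + 1 * |rr n i (d 0) - ((i : ℝ)/n) ^ (d 0)| := by
                rw [abs_mul, abs_mul]
                gcongr
                · rw [abs_of_nonneg hr0.1]; exact hr0.2
                · rw [abs_of_nonneg hv1.1]; exact hv1.2
            _ ≤ 2 * (K : ℝ) ^ 2 / ((n : ℝ) - K) := by
                rw [one_mul, one_mul]
                have : 2 * (K : ℝ) ^ 2 / ((n : ℝ) - K)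
                    = (K : ℝ) ^ 2 / ((n : ℝ) - K) + (K : ℝ) ^ 2 / ((n : ℝ) - K) := by ring
                rw [this]
                exact add_le_add hb1 hb0
        calc |coeff d q * rr n i (d 0) * rr n j (d 1)
              - coeff d q * ((i : ℝ)/n) ^ (d 0) * ((j : ℝ)/n) ^ (d 1)|
            = |coeff d q| * |rr n i (d 0) * rr n j (d 1)
                - ((i : ℝ)/n) ^ (d 0) * ((j : ℝ)/n) ^ (d 1)| := by
              rw [← abs_mul]; congr 1; ring
          _ ≤ |coeff d q| * (2 * (K : ℝ) ^ 2 / ((n : ℝ) - K)) := by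
              exact mul_le_mul_of_nonneg_left hprod (abs_nonneg _)
      refine (Finset.sum_le_sum hterm).trans ?_
      rw [← Finset.sum_mul, ← hA]
      calc A * (2 * (K : ℝ) ^ 2 / ((n : ℝ) - K))
          = 2 * A * (K : ℝ) ^ 2 / ((n : ℝ) - K) := by ring
        _ ≤ 2 * A * (K : ℝ) ^ 2 / ((n : ℝ) - K) := le_refl _
    have hlow := (abs_le.mp hdiff).1
    linarith
  -- the expansion identity
  have expand : ∀ s : Fin 2 → ℝ, eval s q
      = ∑ i ∈ Finset.range (n+1), ∑ j ∈ Finset.range (n+1),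
          c i j * (n.choose i : ℝ) * (n.choose j : ℝ)
            * (s 0) ^ i * (1 - s 0) ^ (n-i) * (s 1) ^ j * (1 - s 1) ^ (n-j) := by
    intro s
    rw [eval_eq']
    have step1 : ∀ d ∈ q.support,
        coeff d q * ∏ t, s t ^ d t
        = ∑ i ∈ Finset.range (n+1), ∑ j ∈ Finset.range (n+1),
            (coeff d q * rr n i (d 0) * rr n j (d 1))
              * ((n.choose i : ℝ) * (n.choose j : ℝ)
                * (s 0) ^ i * (1 - s 0) ^ (n-i) * (s 1) ^ j * (1 - s 1) ^ (n-j)) := by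
      intro d hd
      rw [Fin.prod_univ_two]
      rw [bern_expand n (d 0) (le_trans (hdK d hd 0) hKn.le) (s 0) (1 - s 0) (by ring),
          bern_expand n (d 1) (le_trans (hdK d hd 1) hKn.le) (s 1) (1 - s 1) (by ring)]
      rw [Finset.sum_mul_sum, Finset.mul_sum]
      refine Finset.sum_congr rfl fun i _ => ?_
      rw [Finset.mul_sum]
      refine Finset.sum_congr rfl fun j _ => ?_
      ring
    rw [Finset.sum_congr rfl step1, Finset.sum_comm]
    refine Finset.sum_congr rfl fun i _ => ?_
    rw [Finset.sum_comm]
    refine Finset.sum_congr rfl fun j _ => ?_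
    rw [hc, ← Finset.sum_mul]
    ring
  -- assemble the answer
  refine ⟨2 * n,
    fun α => if h : α 0 + α 1 = n ∧ α 2 + α 3 = n
      then c (α 0) (α 2) * (n.choose (α 0) : ℝ) * (n.choose (α 2) : ℝ) * 4 ^ n
      else 0, ?_, ?_⟩
  · intro α
    dsimp only
    by_cases h : α 0 + α 1 = n ∧ α 2 + α 3 = n
    · rw [dif_pos h]
      have h0 : α 0 ≤ n := by omega
      have h2 : α 2 ≤ n := by omega
      have := hcpos (α 0) (α 2) h0 h2
      positivity
    · rw [dif_neg h]
  · intro x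
    set s : Fin 2 → ℝ := fun t => (1 + x t) / 2 with hs
    have hx : eval x p = eval s q := by
      rw [eval_q s]
      have hsx : (fun t => 2 * s t - 1) = x := by
        funext t
        show 2 * s t - 1 = x t
        rw [hs]
        show 2 * ((1 + x t) / 2) - 1 = x t
        ring
      rw [hsx]
    rw [hx, expand s]
    -- now reindex the RHS
    set F : (Fin 4 → ℕ) → ℝ := fun α =>
      (if h : α 0 + α 1 = n ∧ α 2 + α 3 = n
        then c (α 0) (α 2) * (n.choose (α 0) : ℝ) * (n.choose (α 2) : ℝ) * 4 ^ n
        else 0) * ((1 + x 0) / 4) ^ α 0 * ((1 - x 0) / 4) ^ α 1 *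
              ((1 + x 1) / 4) ^ α 2 * ((1 - x 1) / 4) ^ α 3 with hF
    show _ = ∑ α ∈ (Fintype.piFinset fun _ : Fin 4 => Finset.range (2*n + 1)).filter
              (fun α => ∑ i, α i ≤ 2*n), F α
    set S := (Fintype.piFinset fun _ : Fin 4 => Finset.range (2*n + 1)).filter
              (fun α => ∑ i, α i ≤ 2*n) with hS
    have hme : ∀ i j : ℕ,
        ((![i, n-i, j, n-j] : Fin 4 → ℕ) 0 = i) ∧ ((![i, n-i, j, n-j] : Fin 4 → ℕ) 1 = n - i)
          ∧ ((![i, n-i, j, n-j] : Fin 4 → ℕ) 2 = j) ∧ ((![i, n-i, j, n-j] : Fin 4 → ℕ) 3 = n - j) :=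
      fun i j => ⟨rfl, rfl, rfl, rfl⟩
    have hsub : ∑ α ∈ S, F α
        = ∑ α ∈ S.filter (fun α => α 0 + α 1 = n ∧ α 2 + α 3 = n), F α := by
      refine (Finset.sum_filter_of_ne ?_).symm
      intro α hα hne
      by_contra hPα
      apply hne
      rw [hF]
      dsimp only
      rw [dif_neg hPα]
      ring
    have pow4 : ∀ (u v : ℝ) (a : ℕ), a ≤ n →
        (u/4)^a * (v/4)^(n-a) = (u/2)^a * (v/2)^(n-a) * ((1:ℝ)/2)^n := by
      intro u v a ha
      have e : a + (n - a) = n := by omega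
      have e4 : (u/4 : ℝ) = u/2 * (1/2) := by ring
      have e4' : (v/4 : ℝ) = v/2 * (1/2) := by ring
      calc (u/4)^a * (v/4)^(n-a) = ((u/2)*(1/2))^a * ((v/2)*(1/2))^(n-a) := by rw [e4, e4']
        _ = (u/2)^a * (v/2)^(n-a) * ((1/2)^a * (1/2)^(n-a)) := by
            rw [mul_pow, mul_pow]; ring
        _ = (u/2)^a * (v/2)^(n-a) * (1/2)^n := by rw [← pow_add, e]
    have h4n : (4:ℝ)^n * ((1:ℝ)/2)^n * ((1:ℝ)/2)^n = 1 := by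
      rw [← mul_pow, ← mul_pow]
      norm_num
    rw [hsub, ← Finset.sum_product']
    refine Finset.sum_nbij' (i := fun pr : ℕ × ℕ => ![pr.1, n - pr.1, pr.2, n - pr.2])
      (j := fun α => (α 0, α 2)) ?_ ?_ ?_ ?_ ?_
    · rintro ⟨i, j⟩ hij
      rw [Finset.mem_product, Finset.mem_range, Finset.mem_range] at hij
      obtain ⟨hi, hj⟩ := hij
      obtain ⟨m0, m1, m2, m3⟩ := hme i j
      rw [Finset.mem_filter, hS, Finset.mem_filter]
      refine ⟨⟨?_, ?_⟩, ?_⟩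
      · rw [Fintype.mem_piFinset]
        intro t
        rw [Finset.mem_range]
        fin_cases t
        · show (![i, n-i, j, n-j] : Fin 4 → ℕ) 0 < 2*n+1
          rw [m0]; omega
        · show (![i, n-i, j, n-j] : Fin 4 → ℕ) 1 < 2*n+1
          rw [m1]; omega
        · show (![i, n-i, j, n-j] : Fin 4 → ℕ) 2 < 2*n+1
          rw [m2]; omega
        · show (![i, n-i, j, n-j] : Fin 4 → ℕ) 3 < 2*n+1
          rw [m3]; omega
      · show ∑ t : Fin 4, (![i, n - i, j, n - j] : Fin 4 → ℕ) t ≤ 2 * n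
        rw [Fin.sum_univ_four, m0, m1, m2, m3]
        omega
      · show (![i, n-i, j, n-j] : Fin 4 → ℕ) 0 + (![i, n-i, j, n-j] : Fin 4 → ℕ) 1 = n
            ∧ (![i, n-i, j, n-j] : Fin 4 → ℕ) 2 + (![i, n-i, j, n-j] : Fin 4 → ℕ) 3 = n
        rw [m0, m1, m2, m3]
        omega
    · intro α hα
      rw [Finset.mem_filter] at hα
      have hPα : α 0 + α 1 = n ∧ α 2 + α 3 = n := hα.2
      rw [Finset.mem_product, Finset.mem_range, Finset.mem_range]
      show α 0 < n + 1 ∧ α 2 < n + 1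
      omega
    · rintro ⟨i, j⟩ _
      show ((![i, n-i, j, n-j] : Fin 4 → ℕ) 0, (![i, n-i, j, n-j] : Fin 4 → ℕ) 2) = (i, j)
      obtain ⟨m0, m1, m2, m3⟩ := hme i j
      rw [m0, m2]
    · intro α hα
      rw [Finset.mem_filter] at hα
      have hPα : α 0 + α 1 = n ∧ α 2 + α 3 = n := hα.2
      show (![α 0, n - α 0, α 2, n - α 2] : Fin 4 → ℕ) = α
      obtain ⟨m0, m1, m2, m3⟩ := hme (α 0) (α 2)
      funext t
      fin_cases t
      · exact m0
      · show (![α 0, n - α 0, α 2, n - α 2] : Fin 4 → ℕ) 1 = α 1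
        rw [m1]; omega
      · exact m2
      · show (![α 0, n - α 0, α 2, n - α 2] : Fin 4 → ℕ) 3 = α 3
        rw [m3]; omega
    · rintro ⟨i, j⟩ hij
      rw [Finset.mem_product, Finset.mem_range, Finset.mem_range] at hij
      have hi : i ≤ n := by omega
      have hj : j ≤ n := by omega
      obtain ⟨m0, m1, m2, m3⟩ := hme i j
      rw [hF]
      dsimp only
      rw [m0, m1, m2, m3, dif_pos (⟨by omega, by omega⟩ : i + (n - i) = n ∧ j + (n - j) = n)]
      have hs0 : s 0 = (1 + x 0) / 2 := rfl
      have hs1 : s 1 = (1 + x 1) / 2 := rfl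
      have ht0 : (1 : ℝ) - s 0 = (1 - x 0) / 2 := by rw [hs0]; ring
      have ht1 : (1 : ℝ) - s 1 = (1 - x 1) / 2 := by rw [hs1]; ring
      have h40 := pow4 (1 + x 0) (1 - x 0) i hi
      have h41 := pow4 (1 + x 1) (1 - x 1) j hj
      rw [hs0, hs1, ht0, ht1]
      calc c i j * (n.choose i : ℝ) * (n.choose j : ℝ) * ((1 + x 0)/2)^i * ((1 - x 0)/2)^(n-i)
              * ((1 + x 1)/2)^j * ((1 - x 1)/2)^(n-j)
          = c i j * (n.choose i : ℝ) * (n.choose j : ℝ)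
              * ((4:ℝ)^n * ((1:ℝ)/2)^n * ((1:ℝ)/2)^n)
              * ((1 + x 0)/2)^i * ((1 - x 0)/2)^(n-i)
              * ((1 + x 1)/2)^j * ((1 - x 1)/2)^(n-j) := by rw [h4n]; ring
        _ = c i j * (n.choose i : ℝ) * (n.choose j : ℝ) * 4^n
              * (((1 + x 0)/2)^i * ((1 - x 0)/2)^(n-i) * ((1:ℝ)/2)^n)
              * (((1 + x 1)/2)^j * ((1 - x 1)/2)^(n-j) * ((1:ℝ)/2)^n) := by ring
        _ = c i j * (n.choose i : ℝ) * (n.choose j : ℝ) * 4^n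
              * (((1 + x 0)/4)^i * ((1 - x 0)/4)^(n-i))
              * (((1 + x 1)/4)^j * ((1 - x 1)/4)^(n-j)) := by rw [h40, h41]
        _ = c i j * (n.choose i : ℝ) * (n.choose j : ℝ) * 4^n * ((1 + x 0)/4)^i
              * ((1 - x 0)/4)^(n-i) * ((1 + x 1)/4)^j * ((1 - x 1)/4)^(n-j) := by ring
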